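/- For integers n ≥ 1 and 1 ≤ δ ≤ w ≤ n, set t = w−δ+1. Then A(n,2δ,w) · C(n−t, w−t) ≤ C(n,w), where C(a,b) denotes the binomial coefficient. -/

import Mathlib

/-- The weight of a binary word: the number of its nonzero entries. -/
def wt {n : ℕ} (x : Fin n → Bool) : ℕ :=
  (Finset.univ.filter (fun i => x i = true)).card

/-- `Acw n d w` is the maximum size of a binary code of length `n`, constant weight `w`,
and minimum Hamming distance at least `d`. -/
noncomputable def Acw (n d w : ℕ) : ℕ :=
  sSup {m | ∃ C : Finset (Fin n → Bool), C.card = m ∧ (∀ c ∈ C, wt c = w) ∧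
    ∀ c ∈ C, ∀ c' ∈ C, c ≠ c' → d ≤ hammingDist c c'}

/-- The support of a binary word, as a finset. -/
def supp {n : ℕ} (x : Fin n → Bool) : Finset (Fin n) :=
  Finset.univ.filter (fun i => x i = true)

lemma wt_eq_card_supp {n : ℕ} (x : Fin n → Bool) : wt x = (supp x).card := rfl

lemma hamming_inter {n : ℕ} (x y : Fin n → Bool) :
    hammingDist x y + 2 * (supp x ∩ supp y).card = (supp x).card + (supp y).card := by
  have h1 : hammingDist x y = (symmDiff (supp x) (supp y)).card := by
    unfold hammingDist
    congr 1
    ext i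
    simp [supp, Finset.mem_symmDiff]
    cases hx : x i <;> cases hy : y i <;> simp
  have h2 : (symmDiff (supp x) (supp y)).card + (supp x ∩ supp y).card = (supp x ∪ supp y).card := by
    rw [symmDiff_eq_sup_sdiff_inf]
    exact Finset.card_sdiff_add_card_eq_card
      (le_trans inf_le_left (le_sup_left : supp x ≤ supp x ⊔ supp y))
  have h3 := Finset.card_union_add_card_inter (supp x) (supp y)
  omega

/-- With `t = w−δ+1`, `A(n,2δ,w) · C(n−t,w−t) ≤ C(n,w)`. -/
theorem constant_weight_anticode_bound (n δ w : ℕ) (hn : 1 ≤ n) (hδ : 1 ≤ δ)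
    (hδw : δ ≤ w) (hwn : w ≤ n) :
    Acw n (2 * δ) w * (n - (w - δ + 1)).choose (w - (w - δ + 1)) ≤ n.choose w := by
  set t := w - δ + 1 with ht
  have htw : t ≤ w := by omega
  -- the defining set is nonempty and bounded above
  have hne : {m | ∃ C : Finset (Fin n → Bool), C.card = m ∧ (∀ c ∈ C, wt c = w) ∧
      ∀ c ∈ C, ∀ c' ∈ C, c ≠ c' → 2 * δ ≤ hammingDist c c'}.Nonempty :=
    ⟨0, ∅, by simp⟩
  have hbdd : BddAbove {m | ∃ C : Finset (Fin n → Bool), C.card = m ∧ (∀ c ∈ C, wt c = w) ∧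
      ∀ c ∈ C, ∀ c' ∈ C, c ≠ c' → 2 * δ ≤ hammingDist c c'} := by
    refine ⟨Fintype.card (Fin n → Bool), ?_⟩
    rintro m ⟨C, hC, -, -⟩
    exact hC ▸ Finset.card_le_univ C
  obtain ⟨C, hcard, hwtC, hdist⟩ := Nat.sSup_mem hne hbdd
  -- key: |C| * C(w,t) ≤ C(n,t)
  have key : C.card * w.choose t ≤ n.choose t := by
    have hdisj : ∀ c ∈ C, ∀ c' ∈ C, c ≠ c' →
        Disjoint ((supp c).powersetCard t) ((supp c').powersetCard t) := by
      intro c hc c' hc' hne'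
      rw [Finset.disjoint_left]
      intro T hT hT'
      rw [Finset.mem_powersetCard] at hT hT'
      have hsub : T ⊆ supp c ∩ supp c' := Finset.subset_inter hT.1 hT'.1
      have h1 : t ≤ (supp c ∩ supp c').card := hT.2 ▸ Finset.card_le_card hsub
      have h2 := hamming_inter c c'
      have h3 := hdist c hc c' hc' hne'
      have h4 := hwtC c hc
      have h5 := hwtC c' hc'
      rw [wt_eq_card_supp] at h4 h5
      omega
    calc C.card * w.choose t
        = ∑ c ∈ C, ((supp c).powersetCard t).card := by
          rw [Finset.sum_congr rfl (fun c hc => ?_), Finset.sum_const, smul_eq_mul]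
          rw [Finset.card_powersetCard]
          congr 1
          rw [← wt_eq_card_supp, hwtC c hc]
      _ = (C.biUnion (fun c => (supp c).powersetCard t)).card :=
          (Finset.card_biUnion hdisj).symm
      _ ≤ ((Finset.univ : Finset (Fin n)).powersetCard t).card := by
          apply Finset.card_le_card
          intro T hT
          rw [Finset.mem_biUnion] at hT
          obtain ⟨c, -, hT⟩ := hT
          rw [Finset.mem_powersetCard] at hT ⊢
          exact ⟨Finset.subset_univ T, hT.2⟩
      _ = n.choose t := by rw [Finset.card_powersetCard, Finset.card_univ, Fintype.card_fin]
  rw [hcard] at *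
  have hpos : 0 < w.choose t := Nat.choose_pos htw
  have hmul : n.choose w * w.choose t = n.choose t * (n - t).choose (w - t) :=
    Nat.choose_mul htw
  have : Acw n (2 * δ) w * (n - t).choose (w - t) * w.choose t ≤ n.choose w * w.choose t := by
    rw [hmul]
    calc Acw n (2 * δ) w * (n - t).choose (w - t) * w.choose t
        = Acw n (2 * δ) w * w.choose t * (n - t).choose (w - t) := by ring
      _ ≤ n.choose t * (n - t).choose (w - t) := Nat.mul_le_mul_right _ key
  exact Nat.le_of_mul_le_mul_right this hpos
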